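/- Every x ∈ 𝕋 satisfies R_up(x) ≥ limsup_{k→∞} q_{k+1}/(q_{k+1} + q_k - 1), and there exists a point x ∈ 𝕋 attaining equality; that is, min_{x ∈ 𝕋} R_up(x) = limsup_{k→∞} q_{k+1}/(q_{k+1} + q_k - 1). -/

import Mathlib

open Filter MeasureTheory Set
open scoped ENNReal

noncomputable section

/-- The rotation of the circle `𝕋 = ℝ/ℤ` by the angle `α`. -/
def rotF (α : ℝ) (y : UnitAddCircle) : UnitAddCircle := y + (α : UnitAddCircle)

/-- The Poincaré return time `τ(M)` of a set `M ⊆ 𝕋` under the rotation by `α`. -/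
def retTime (α : ℝ) (M : Set UnitAddCircle) : ℕ :=
  sInf {k : ℕ | 1 ≤ k ∧ ((rotF α)^[k] '' M ∩ M).Nonempty}

/-- The arc `I₁ = [1-α, 1)` of the circle. -/
def I1 (α : ℝ) : Set UnitAddCircle := (fun t : ℝ => (t : UnitAddCircle)) '' Ico (1 - α) 1

/-- The `n`-th cylinder interval `I_{x,n}` of `x` for the Sturmian coding
(`I_{x,0} = 𝕋` by convention). -/
def cyl (α : ℝ) (x : UnitAddCircle) (n : ℕ) : Set UnitAddCircle :=
  {y | ∀ k < n, ((rotF α)^[k] y ∈ I1 α ↔ (rotF α)^[k] x ∈ I1 α)}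

/-- The lower local return rate `R_low(x) = liminf_n τ(I_{x,n})/n`, valued in `[0,∞]`. -/
def Rlow (α : ℝ) (x : UnitAddCircle) : ℝ≥0∞ :=
  liminf (fun n : ℕ => (retTime α (cyl α x n) : ℝ≥0∞) / (n : ℝ≥0∞)) atTop

/-- The upper local return rate `R_up(x) = limsup_n τ(I_{x,n})/n`, valued in `[0,∞]`. -/
def Rup (α : ℝ) (x : UnitAddCircle) : ℝ≥0∞ :=
  limsup (fun n : ℕ => (retTime α (cyl α x n) : ℝ≥0∞) / (n : ℝ≥0∞)) atTop

/-- `rjump α q x k` is the paper's `r_{k-1}(x) = min {n | τ(I_{x,n}) ≥ q_{k-1+1}}`: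
with our indexing, `q (k+1)` is the paper's `q_k`.  In particular `rjump α q x (k+1)`
is the paper's `r_k(x)` for `k ≥ 0`, and `rjump α q x 0` is the paper's `r_{-1}(x) = 0`. -/
def rjump (α : ℝ) (q : ℕ → ℕ) (x : UnitAddCircle) (k : ℕ) : ℕ :=
  sInf {n : ℕ | q (k + 1) ≤ retTime α (cyl α x n)}

-- basics
lemma coe_add_int (r : ℝ) (n : ℤ) : ((r + n : ℝ) : UnitAddCircle) = (r : UnitAddCircle) := by
  rw [AddCircle.coe_add]; simp

lemma coe_fract (r : ℝ) : ((Int.fract r : ℝ) : UnitAddCircle) = (r : UnitAddCircle) := by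
  rw [QuotientAddGroup.eq_iff_sub_mem]
  refine AddSubgroup.mem_zmultiples_iff.mpr ⟨-⌊r⌋, ?_⟩
  rw [zsmul_eq_mul]; push_cast [Int.fract]; ring

lemma rot_iter (α : ℝ) (r : ℝ) (k : ℕ) :
    (rotF α)^[k] (r : UnitAddCircle) = ((r + k * α : ℝ) : UnitAddCircle) := by
  induction k with
  | zero => simp
  | succ k ih =>
      rw [Function.iterate_succ_apply', ih]
      show _ + _ = _
      rw [← AddCircle.coe_add]
      push_cast
      ring_nf

lemma mem_I1 (α : ℝ) (hα : α ∈ Set.Ioo (0:ℝ) 1) (r : ℝ) :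
    (r : UnitAddCircle) ∈ I1 α ↔ 1 - α ≤ Int.fract r := by
  constructor
  · rintro ⟨t, ht, hteq⟩
    have h := (QuotientAddGroup.eq_iff_sub_mem).mp hteq
    obtain ⟨n, hn⟩ := AddSubgroup.mem_zmultiples_iff.mp h
    rw [zsmul_eq_mul, mul_one] at hn
    have hrt : t = r + ((n : ℝ)) := by linarith
    have hft : Int.fract r = t := by
      have h1 : Int.fract t = Int.fract r := by rw [hrt]; exact_mod_cast Int.fract_add_intCast r n
      rw [← h1]
      exact Int.fract_eq_self.mpr ⟨by linarith [hα.2, ht.1], ht.2⟩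
    rw [hft]; exact ht.1
  · intro h
    exact ⟨Int.fract r, ⟨h, Int.fract_lt_one r⟩, coe_fract r⟩

/-- coding step -/
def stp (α r : ℝ) (k : ℕ) : ℤ := ⌊r + (k+1) * α⌋ - ⌊r + k * α⌋

lemma stp_eq (α : ℝ) (hα : α ∈ Set.Ioo (0:ℝ) 1) (r : ℝ) (k : ℕ) :
    stp α r k = if 1 - α ≤ Int.fract (r + k * α) then 1 else 0 := by
  have h1 : r + (k+1) * α = (r + k * α) + α := by ring
  set x := r + k * α with hx
  have : ⌊x + α⌋ = ⌊x⌋ + ⌊Int.fract x + α⌋ := by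
    conv_lhs => rw [show x + α = (⌊x⌋ : ℝ) + (Int.fract x + α) by rw [Int.fract]; ring]
    rw [Int.floor_intCast_add]
  rw [stp, h1, this]
  rcases le_or_gt (1 - α) (Int.fract x) with h | h
  · have h2 : ⌊Int.fract x + α⌋ = 1 := by
      have := Int.fract_lt_one x
      refine Int.floor_eq_iff.mpr ⟨by push_cast; linarith, by push_cast; linarith [hα.2]⟩
    simp [h2, h, ← hx]
  · have h2 : ⌊Int.fract x + α⌋ = 0 := by
      have := Int.fract_nonneg x
      refine Int.floor_eq_iff.mpr ⟨by push_cast; linarith [hα.1], by push_cast; linarith⟩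
    simp [h2, not_le.mpr h, ← hx]

lemma mem_cyl (α : ℝ) (hα : α ∈ Set.Ioo (0:ℝ) 1) (r ρ : ℝ) (n : ℕ) :
    ((r : UnitAddCircle) ∈ cyl α (ρ : ℝ) n) ↔ ∀ k < n, stp α r k = stp α ρ k := by
  unfold cyl
  rw [Set.mem_setOf_eq]
  apply forall_congr'; intro k; apply imp_congr_right; intro _
  rw [rot_iter, rot_iter, mem_I1 α hα, mem_I1 α hα, stp_eq α hα, stp_eq α hα]
  rcases le_or_gt (1-α) (Int.fract (r + k * α)) with h1 | h1 <;>
    rcases le_or_gt (1-α) (Int.fract (ρ + k * α)) with h2 | h2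
  · simp [h1, h2]
  · simp [h1, not_le.mpr h2]
  · simp [not_le.mpr h1, h2]
  · simp [not_le.mpr h1, not_le.mpr h2]

lemma floor_const_of_stp (α r r' : ℝ) (n : ℕ) (h : ∀ k < n, stp α r' k = stp α r k) :
    ∀ k ≤ n, ⌊r' + k * α⌋ - ⌊r + k * α⌋ = ⌊r'⌋ - ⌊r⌋ := by
  intro k hk
  induction k with
  | zero => simp
  | succ k ih =>
      have hlt : k < n := hk
      have := h k hlt
      unfold stp at this
      have ihh := ih (le_of_lt hk)
      push_cast
      push_cast at ihh this
      linarith [this, ihh]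

lemma stp_of_floor_const (α r r' : ℝ) (n : ℕ) (c : ℤ)
    (h : ∀ k ≤ n, ⌊r' + k * α⌋ - ⌊r + k * α⌋ = c) :
    ∀ k < n, stp α r' k = stp α r k := by
  intro k hk
  unfold stp
  have h1 := h k (le_of_lt hk)
  have h2 := h (k+1) hk
  push_cast at *
  linarith

section NT
variable (α : ℝ) (a p q : ℕ → ℕ)

def del (k : ℕ) : ℝ := (q k : ℝ) * α - (p k : ℝ)
def sgn (k : ℕ) : ℝ := (-1 : ℝ) ^ (k + 1)
def eta (k : ℕ) : ℝ := sgn k * del α p q k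

lemma sgn_mul_self (k : ℕ) : sgn k * sgn k = 1 := by
  unfold sgn; rw [← pow_add]; exact Even.neg_one_pow ⟨k+1, by ring⟩

lemma sgn_succ (k : ℕ) : sgn (k+1) = - sgn k := by unfold sgn; rw [pow_succ]; ring

lemma del_eq (k : ℕ) : del α p q k = sgn k * eta α p q k := by
  unfold eta; rw [← mul_assoc, sgn_mul_self, one_mul]

variable (ha : ∀ k, 1 ≤ a k)
  (hq0 : q 0 = 0) (hq1 : q 1 = 1) (hq : ∀ k, q (k + 2) = a k * q (k + 1) + q k)
  (hp0 : p 0 = 1) (hp1 : p 1 = 0) (hp : ∀ k, p (k + 2) = a k * p (k + 1) + p k)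
  (hcf : ∀ k, 0 < (-1 : ℝ) ^ (k + 1) * ((q k : ℝ) * α - (p k : ℝ)))

section
include hcf
lemma eta_pos (k : ℕ) : 0 < eta α p q k := hcf k
end

section
include ha hq1 hq
lemma q_pos : ∀ k, 1 ≤ q (k + 1) := by
  intro k
  induction k with
  | zero => simpa using hq1.ge
  | succ k ih =>
      show 1 ≤ q (k + 2)
      have h2 := Nat.mul_le_mul (ha k) ih
      have h3 := hq k
      omega
end

section
include hq hp
lemma del_rec (k : ℕ) : del α p q (k+2) = (a k : ℝ) * del α p q (k+1) + del α p q k := by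
  unfold del; rw [hq k, hp k]; push_cast; ring
end

section
include hq hp
lemma eta_rec (k : ℕ) : eta α p q k = (a k : ℝ) * eta α p q (k+1) + eta α p q (k+2) := by
  have h := del_rec α a p q hq hp k
  have hs2 : sgn (k+2) = sgn k := by rw [sgn_succ, sgn_succ]; ring
  have hs1 : sgn (k+1) = - sgn k := sgn_succ k
  unfold eta
  rw [hs1, hs2, h]
  ring
end

section
include ha hq hp hcf
lemma eta_lt (k : ℕ) : eta α p q (k+1) < eta α p q k := by
  have h := eta_rec α a p q hq hp k
  have h1 := eta_pos α p q hcf (k+1)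
  have h2 := eta_pos α p q hcf (k+2)
  have h3 : (1:ℝ) ≤ (a k : ℝ) := by exact_mod_cast ha k
  nlinarith

lemma eta_half (k : ℕ) : 2 * eta α p q (k+2) < eta α p q k := by
  have h := eta_rec α a p q hq hp k
  have h1 := eta_lt α a p q ha hq hp hcf (k+1)
  have h2 := eta_pos α p q hcf (k+2)
  have h3 : (1:ℝ) ≤ (a k : ℝ) := by exact_mod_cast ha k
  have h4 := eta_pos α p q hcf (k+1)
  nlinarith

end

section
include ha hq1 hq hp1 hp hcf
lemma eta_odd_small (hα : α ∈ Set.Ioo (0:ℝ) 1) : ∀ m : ℕ, eta α p q (2*m+1) ≤ α / 2^m := by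
  intro m
  induction m with
  | zero =>
      simp only [pow_zero, Nat.mul_zero, Nat.zero_add]
      unfold eta sgn del
      rw [hq1, hp1]
      norm_num
  | succ m ih =>
      have h := eta_half α a p q ha hq hp hcf (2*m+1)
      have : 2*(m+1)+1 = (2*m+1)+2 := by ring
      rw [this, pow_succ]
      have h2 : (0:ℝ) < 2^m := by positivity
      rw [div_mul_eq_div_div]
      linarith [h, ih]
end

section
include hq0 hq1 hq hp0 hp1 hp
lemma detz : ∀ J : ℕ, (q (J+1) : ℤ) * (p J : ℤ) - (q J : ℤ) * (p (J+1) : ℤ) = (-1)^J := by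
  intro J
  induction J with
  | zero => simp [hq0, hq1, hp0, hp1]
  | succ J ih =>
      rw [pow_succ]
      have h1 : (q (J+2) : ℤ) = (a J : ℤ) * (q (J+1) : ℤ) + (q J : ℤ) := by exact_mod_cast hq J
      have h2 : (p (J+2) : ℤ) = (a J : ℤ) * (p (J+1) : ℤ) + (p J : ℤ) := by exact_mod_cast hp J
      rw [show J + 1 + 1 = J + 2 from rfl, h1, h2]
      linear_combination (-1 : ℤ) * ih

lemma decomp (J : ℕ) (i c : ℤ) :
    ∃ s t : ℤ, i = s * (q J : ℤ) + t * (q (J+1) : ℤ) ∧ c = s * (p J : ℤ) + t * (p (J+1) : ℤ) := by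
  have hdet := detz a p q hq0 hq1 hq hp0 hp1 hp J
  rcases Nat.even_or_odd J with hJ | hJ
  · have he : ((-1:ℤ))^J = 1 := hJ.neg_one_pow
    rw [he] at hdet
    refine ⟨(q (J+1) : ℤ) * c - (p (J+1) : ℤ) * i, (p J : ℤ) * i - (q J : ℤ) * c, ?_, ?_⟩
    · linear_combination (-i) * hdet
    · linear_combination (-c) * hdet
  · have he : ((-1:ℤ))^J = -1 := hJ.neg_one_pow
    rw [he] at hdet
    refine ⟨(p (J+1) : ℤ) * i - (q (J+1) : ℤ) * c, (q J : ℤ) * c - (p J : ℤ) * i, ?_, ?_⟩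
    · linear_combination i * hdet
    · linear_combination c * hdet

end

section
lemma theta_eq (J : ℕ) (i c s t : ℤ)
    (h1 : i = s * (q J : ℤ) + t * (q (J+1) : ℤ)) (h2 : c = s * (p J : ℤ) + t * (p (J+1) : ℤ)) :
    (i:ℝ) * α - (c:ℝ) = (s:ℝ) * del α p q J + (t:ℝ) * del α p q (J+1) := by
  have h1r : (i:ℝ) = (s:ℝ) * (q J : ℝ) + (t:ℝ) * (q (J+1) : ℝ) := by exact_mod_cast h1
  have h2r : (c:ℝ) = (s:ℝ) * (p J : ℝ) + (t:ℝ) * (p (J+1) : ℝ) := by exact_mod_cast h2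
  unfold del
  rw [h1r, h2r]
  ring
end

section
include ha hq0 hq1 hq hp0 hp1 hp hcf

lemma key_eq (j : ℕ) (i c : ℤ) :
    ∃ s t : ℤ, i = s * (q (j+1) : ℤ) + t * (q (j+2) : ℤ) ∧
      sgn (j+1) * ((i:ℝ) * α - (c:ℝ)) = (s:ℝ) * eta α p q (j+1) - (t:ℝ) * eta α p q (j+2) := by
  obtain ⟨s, t, h1, h2⟩ := decomp a p q hq0 hq1 hq hp0 hp1 hp (j+1) i c
  refine ⟨s, t, h1, ?_⟩
  have htheta := theta_eq α p q (j+1) i c s t h1 h2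
  rw [htheta, del_eq α p q (j+1), del_eq α p q (j+2), sgn_succ (j+1)]
  have hms := sgn_mul_self (j+1)
  linear_combination ((s:ℝ) * eta α p q (j+1) - (t:ℝ) * eta α p q (j+2)) * hms

lemma GAP (j : ℕ) (i : ℕ) (c : ℤ) (hi1 : 1 ≤ i) (hi2 : i + 1 ≤ q (j+1) + q (j+2)) :
    eta α p q (j+1) ≤ sgn (j+1) * ((i:ℝ) * α - (c:ℝ)) ∨
      sgn (j+1) * ((i:ℝ) * α - (c:ℝ)) ≤ -(eta α p q (j+2)) := by
  obtain ⟨s, t, h1, key⟩ := key_eq α a p q ha hq0 hq1 hq hp0 hp1 hp hcf j (i:ℤ) c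
  push_cast at key
  have hQ1 : (1:ℤ) ≤ (q (j+1) : ℤ) := by exact_mod_cast q_pos a q ha hq1 hq j
  have hQ2 : (1:ℤ) ≤ (q (j+2) : ℤ) := by exact_mod_cast q_pos a q ha hq1 hq (j+1)
  have hi1' : (1:ℤ) ≤ (i:ℤ) := by exact_mod_cast hi1
  have hi2' : (i:ℤ) + 1 ≤ (q (j+1) : ℤ) + (q (j+2) : ℤ) := by exact_mod_cast hi2
  have hη1 := eta_pos α p q hcf (j+1)
  have hη2 := eta_pos α p q hcf (j+2)
  rcases le_or_gt s 0 with hs | hs <;> rcases le_or_gt t 0 with ht | ht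
  · exfalso; nlinarith
  · right
    have hs' : (s:ℝ) ≤ 0 := by exact_mod_cast hs
    have ht' : (1:ℝ) ≤ (t:ℝ) := by exact_mod_cast ht
    rw [key]; nlinarith
  · left
    have hs' : (1:ℝ) ≤ (s:ℝ) := by exact_mod_cast hs
    have ht' : (t:ℝ) ≤ 0 := by exact_mod_cast ht
    rw [key]; nlinarith
  · exfalso; nlinarith

lemma BA (j : ℕ) (i : ℕ) (c : ℤ) (hi1 : 1 ≤ i) (hi2 : i + 1 ≤ q (j+2)) :
    eta α p q (j+1) ≤ |(i:ℝ) * α - (c:ℝ)| := by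
  obtain ⟨s, t, h1, key⟩ := key_eq α a p q ha hq0 hq1 hq hp0 hp1 hp hcf j (i:ℤ) c
  push_cast at key
  have hQ1 : (1:ℤ) ≤ (q (j+1) : ℤ) := by exact_mod_cast q_pos a q ha hq1 hq j
  have hQ2 : (1:ℤ) ≤ (q (j+2) : ℤ) := by exact_mod_cast q_pos a q ha hq1 hq (j+1)
  have hi1' : (1:ℤ) ≤ (i:ℤ) := by exact_mod_cast hi1
  have hi2' : (i:ℤ) + 1 ≤ (q (j+2) : ℤ) := by exact_mod_cast hi2
  have hη1 := eta_pos α p q hcf (j+1)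
  have hη2 := eta_pos α p q hcf (j+2)
  have habs : |sgn (j+1) * ((i:ℝ) * α - (c:ℝ))| = |(i:ℝ) * α - (c:ℝ)| := by
    rw [abs_mul]
    have : |sgn (j+1)| = 1 := by unfold sgn; rw [abs_pow, abs_neg, abs_one, one_pow]
    rw [this, one_mul]
  rw [← habs, key]
  rcases lt_trichotomy t 0 with ht | ht | ht
  · have hs : 1 ≤ s := by nlinarith
    have hs' : (1:ℝ) ≤ (s:ℝ) := by exact_mod_cast hs
    have ht' : (t:ℝ) ≤ 0 := by exact_mod_cast ht.le
    refine le_abs.mpr (Or.inl ?_)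
    nlinarith
  · subst ht
    have hs : 1 ≤ s := by nlinarith
    have hs' : (1:ℝ) ≤ (s:ℝ) := by exact_mod_cast hs
    refine le_abs.mpr (Or.inl ?_)
    push_cast
    nlinarith
  · have hs : s ≤ -1 := by nlinarith
    have hs' : (s:ℝ) ≤ -1 := by exact_mod_cast hs
    have ht' : (1:ℝ) ≤ (t:ℝ) := by exact_mod_cast ht
    refine le_abs.mpr (Or.inr ?_)
    nlinarith
end
end NT

section DYN
variable (α : ℝ) (a p q : ℕ → ℕ)
variable (hα : α ∈ Set.Ioo (0:ℝ) 1)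
  (ha : ∀ k, 1 ≤ a k)
  (hq0 : q 0 = 0) (hq1 : q 1 = 1) (hq : ∀ k, q (k + 2) = a k * q (k + 1) + q k)
  (hp0 : p 0 = 1) (hp1 : p 1 = 0) (hp : ∀ k, p (k + 2) = a k * p (k + 1) + p k)
  (hcf : ∀ k, 0 < (-1 : ℝ) ^ (k + 1) * ((q k : ℝ) * α - (p k : ℝ)))

lemma fract_shift (x d : ℝ) : Int.fract (x + d) = Int.fract (Int.fract x + d) := by
  conv_lhs => rw [show x + d = (⌊x⌋ : ℝ) + (Int.fract x + d) by rw [Int.fract]; ring]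
  rw [Int.fract_intCast_add]

include hα in
lemma cyl_nbhd (ξ w : ℝ) (n : ℕ) (hw0 : 0 ≤ w)
    (hbnd : ∀ k < n, w < (if Int.fract (ξ + k*α) < 1 - α then 1 - α - Int.fract (ξ + k*α)
      else 1 - Int.fract (ξ + k*α))) :
    ((ξ + w : ℝ) : UnitAddCircle) ∈ cyl α ((ξ : ℝ) : UnitAddCircle) n := by
  intro k hk
  rw [rot_iter, rot_iter, mem_I1 α hα, mem_I1 α hα]
  have hb := hbnd k hk
  have h0 := Int.fract_nonneg (ξ + k*α)
  have h1 := Int.fract_lt_one (ξ + k*α)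
  have hto : Int.fract (ξ + w + k*α) = Int.fract (ξ + k*α) + w := by
    rw [show ξ + w + k*α = (ξ + k*α) + w by ring, fract_shift]
    refine Int.fract_eq_self.mpr ⟨by linarith, ?_⟩
    split_ifs at hb with hcase
    · linarith [hα.1]
    · linarith
  rw [hto]
  split_ifs at hb with hcase
  · constructor <;> intro h <;> linarith
  · constructor <;> intro h <;> [linarith; linarith]

include hα ha hq1 hq hp1 hp hcf in
lemma ret_nonempty (x : UnitAddCircle) (n : ℕ) :
    {k : ℕ | 1 ≤ k ∧ ((rotF α)^[k] '' (cyl α x n) ∩ (cyl α x n)).Nonempty}.Nonempty := by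
  obtain ⟨ξ, rfl⟩ := QuotientAddGroup.mk_surjective x
  set b : ℕ → ℝ := fun k => (if Int.fract (ξ + k*α) < 1 - α then 1 - α - Int.fract (ξ + k*α)
      else 1 - Int.fract (ξ + k*α)) with hb
  have hbpos : ∀ k, 0 < b k := by
    intro k
    have h1 := Int.fract_lt_one (ξ + k*α)
    simp only [hb]
    split_ifs with hcase
    · linarith [Int.fract_nonneg (ξ + k*α)]
    · linarith
  set W : ℝ := (Finset.range (n+1)).inf' ⟨0, by simp⟩ b with hW
  have hWpos : 0 < W := by
    obtain ⟨i, _, hi⟩ := Finset.exists_mem_eq_inf' (s := Finset.range (n+1)) ⟨0, by simp⟩ b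
    rw [hW, hi]
    exact hbpos i
  obtain ⟨mm, hmm⟩ := exists_pow_lt_of_lt_one hWpos (by norm_num : (1:ℝ)/2 < 1)
  set j := 2*mm + 1 with hj
  have hηW : eta α p q j < W := by
    have h1 := eta_odd_small α a p q ha hq1 hq hp1 hp hcf hα mm
    have h2 : α / 2^mm ≤ ((1:ℝ)/2)^mm := by
      rw [div_pow, one_pow]
      gcongr
      exact hα.2.le
    linarith
  have hsgnj : sgn j = 1 := by
    unfold sgn
    exact Even.neg_one_pow ⟨mm+1, by omega⟩
  have hdelj : del α p q j = eta α p q j := by rw [del_eq, hsgnj, one_mul]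
  have hqj : 1 ≤ q j := q_pos a q ha hq1 hq (2*mm)
  refine ⟨q j, hqj, ⟨((ξ + eta α p q j : ℝ) : UnitAddCircle), ⟨((ξ:ℝ) : UnitAddCircle), ?_, ?_⟩, ?_⟩⟩
  · intro k _; exact Iff.rfl
  · rw [rot_iter]
    have : ξ + (q j : ℝ) * α = (ξ + eta α p q j) + ((p j : ℤ) : ℝ) := by
      have : (q j : ℝ) * α - (p j : ℝ) = eta α p q j := hdelj ▸ rfl
      push_cast
      unfold del at hdelj
      linarith [hdelj]
    rw [this, coe_add_int]
  · apply cyl_nbhd α hα ξ (eta α p q j) n (le_of_lt (eta_pos α p q hcf j))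
    intro k hk
    have : W ≤ b k := Finset.inf'_le b (Finset.mem_range.mpr (by omega))
    simpa [hb] using lt_of_lt_of_le hηW this

include hα ha hq0 hq1 hq hp0 hp1 hp hcf in
lemma no_gap (β v ℓ : ℝ) (k n : ℕ) (hn : n + 1 = q (k+1) + q (k+2))
    (hℓ1 : eta α p q (k+1) ≤ ℓ) (hℓ2 : ℓ < 1)
    (hav : ∀ i ≤ n, Int.fract (β + i*α - v) < 1 - ℓ) : False := by
  set g : ℕ → ℝ := fun i => Int.fract (β + i*α - v) with hg
  have hq1k : 1 ≤ q (k+1) := q_pos a q ha hq1 hq k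
  have hq2k : 1 ≤ q (k+2) := q_pos a q ha hq1 hq (k+1)
  have hη1 := eta_pos α p q hcf (k+1)
  have hη2 := eta_pos α p q hcf (k+2)
  have hη21 : eta α p q (k+2) < eta α p q (k+1) := eta_lt α a p q ha hq hp hcf (k+1)
  have hnbr : ∀ i ≤ n, ∃ i' ≤ n, ∃ e : ℝ, 0 < e ∧ e ≤ eta α p q (k+1) ∧
      g i' = Int.fract (g i + sgn (k+1) * e) := by
    intro i hi
    rcases le_or_gt (i + q (k+1)) n with hcase | hcase
    · refine ⟨i + q (k+1), hcase, eta α p q (k+1), hη1, le_refl _, ?_⟩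
      have h1 : β + (↑(i + q (k+1)) : ℝ)*α - v
          = (β + i*α - v) + del α p q (k+1) + ((p (k+1) : ℤ) : ℝ) := by
        unfold del; push_cast; ring
      simp only [hg]
      rw [h1, Int.fract_add_intCast, fract_shift, del_eq]
    · have hge : q (k+2) ≤ i := by omega
      refine ⟨i - q (k+2), by omega, eta α p q (k+2), hη2, hη21.le, ?_⟩
      have h1 : β + (↑(i - q (k+2)) : ℝ)*α - v
          = (β + i*α - v) - del α p q (k+2) + (-(p (k+2) : ℤ) : ℝ) := by
        unfold del
        rw [Nat.cast_sub hge]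
        push_cast
        ring
      have h2 : - del α p q (k+2) = sgn (k+1) * eta α p q (k+2) := by
        rw [del_eq]
        have : sgn (k+2) = - sgn (k+1) := sgn_succ (k+1)
        rw [this]; ring
      simp only [hg]
      rw [h1]
      rw [show (-(p (k+2) : ℤ) : ℝ) = ((-(p (k+2):ℤ) : ℤ) : ℝ) by push_cast; ring]
      rw [Int.fract_add_intCast]
      rw [show (β + i*α - v) - del α p q (k+2) = (β + i*α - v) + (- del α p q (k+2)) by ring]
      rw [fract_shift, h2]
  have hsgn : sgn (k+1) = 1 ∨ sgn (k+1) = -1 := by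
    unfold sgn
    rcases Nat.even_or_odd (k+2) with h | h
    · exact Or.inl (Even.neg_one_pow h)
    · exact Or.inr (Odd.neg_one_pow h)
  rcases hsgn with hs | hs
  · obtain ⟨i0, hi0, hmax⟩ := Finset.exists_max_image (Finset.range (n+1)) g ⟨0, by simp⟩
    obtain ⟨i', hi', e, he0, he1, heq⟩ := hnbr i0 (Nat.lt_succ_iff.mp (Finset.mem_range.mp hi0))
    have h1 : 0 ≤ g i0 := Int.fract_nonneg _
    have h2 : g i0 < 1 - ℓ := hav i0 (Nat.lt_succ_iff.mp (Finset.mem_range.mp hi0))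
    have h3 : g i0 + e < 1 := by linarith
    have h4 : g i' = g i0 + e := by
      rw [heq, hs, one_mul]
      exact Int.fract_eq_self.mpr ⟨by linarith, h3⟩
    have h5 : g i' ≤ g i0 := hmax i' (Finset.mem_range.mpr (by omega))
    linarith
  · obtain ⟨i0, hi0, hmin⟩ := Finset.exists_min_image (Finset.range (n+1)) g ⟨0, by simp⟩
    obtain ⟨i', hi', e, he0, he1, heq⟩ := hnbr i0 (Nat.lt_succ_iff.mp (Finset.mem_range.mp hi0))
    have h1 : 0 ≤ g i0 := Int.fract_nonneg _
    have h2 : g i0 < 1 - ℓ := hav i0 (Nat.lt_succ_iff.mp (Finset.mem_range.mp hi0))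
    have h5 : g i0 ≤ g i' := hmin i' (Finset.mem_range.mpr (by omega))
    have hgi' : g i' < 1 - ℓ := hav i' (by omega)
    rw [hs] at heq
    rcases le_or_gt 0 (g i0 - e) with hc | hc
    · have h4 : g i' = g i0 - e := by
        rw [heq]
        rw [show g i0 + (-1)*e = g i0 - e by ring]
        exact Int.fract_eq_self.mpr ⟨hc, by linarith⟩
      linarith
    · have h4 : g i' = g i0 - e + 1 := by
        rw [heq]
        rw [show g i0 + (-1)*e = (g i0 - e + 1) + ((-1 : ℤ) : ℝ) by push_cast; ring]
        rw [Int.fract_add_intCast]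
        refine Int.fract_eq_self.mpr ⟨by linarith, by linarith⟩
      linarith

include hα ha hq0 hq1 hq hp0 hp1 hp hcf in
lemma ret_lower (x : UnitAddCircle) (k n : ℕ) (hn : n + 1 = q (k+1) + q (k+2)) :
    ∀ m ∈ {m : ℕ | 1 ≤ m ∧ ((rotF α)^[m] '' (cyl α x n) ∩ (cyl α x n)).Nonempty}, q (k+2) ≤ m := by
  rintro m ⟨hm1, z, ⟨y, hyM, hyz⟩, hzM⟩
  by_contra hlt
  push_neg at hlt
  obtain ⟨ρ, rfl⟩ := QuotientAddGroup.mk_surjective x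
  obtain ⟨β, rfl⟩ := QuotientAddGroup.mk_surjective y
  rw [rot_iter] at hyz
  subst hyz
  have hyM' := (mem_cyl α hα β ρ n).mp hyM
  have hzM' := (mem_cyl α hα (β + m*α) ρ n).mp hzM
  have hstp : ∀ k' < n, stp α (β + m*α) k' = stp α β k' :=
    fun k' h => (hzM' k' h).trans (hyM' k' h).symm
  have hfl := floor_const_of_stp α β (β + m*α) n hstp
  set T := Int.fract ((m:ℝ)*α) with hT
  have hT0 : 0 ≤ T := Int.fract_nonneg _
  have hTl1 : T < 1 := Int.fract_lt_one _
  have hT1 : eta α p q (k+1) ≤ T := by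
    have h := BA α a p q ha hq0 hq1 hq hp0 hp1 hp hcf k m ⌊(m:ℝ)*α⌋ hm1 hlt
    rwa [show (m:ℝ)*α - (⌊(m:ℝ)*α⌋:ℝ) = T from rfl, abs_of_nonneg hT0] at h
  have hT2 : eta α p q (k+1) ≤ 1 - T := by
    have h := BA α a p q ha hq0 hq1 hq hp0 hp1 hp hcf k m (⌊(m:ℝ)*α⌋ + 1) hm1 hlt
    have e : (m:ℝ)*α - ((⌊(m:ℝ)*α⌋ + 1 : ℤ):ℝ) = T - 1 := by push_cast [hT, Int.fract]; ring
    rw [e, abs_of_nonpos (by linarith)] at h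
    linarith
  have hη1 := eta_pos α p q hcf (k+1)
  -- constant floor of fract + T
  have hfloor2 : ∀ i ≤ n, ⌊Int.fract (β + i*α) + T⌋ = ⌊β + m*α⌋ - ⌊β⌋ - ⌊(m:ℝ)*α⌋ := by
    intro i hi
    have h1 := hfl i hi
    have e1 : β + m*α + i*α = (⌊β + i*α⌋ : ℝ) + (Int.fract (β + i*α) + (m:ℝ)*α) := by
      linear_combination - Int.floor_add_fract (β + (i:ℝ)*α)
    have e2 : Int.fract (β + i*α) + (m:ℝ)*α
        = (⌊(m:ℝ)*α⌋ : ℝ) + (Int.fract (β + i*α) + T) := by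
      rw [hT]
      linear_combination - Int.floor_add_fract ((m:ℝ)*α)
    have h2 : ⌊β + m*α + i*α⌋ = ⌊β + i*α⌋ + (⌊(m:ℝ)*α⌋ + ⌊Int.fract (β + i*α) + T⌋) := by
      rw [e1, Int.floor_intCast_add]
      congr 1
      rw [e2, Int.floor_intCast_add]
    omega
  have hconst : ∀ i ≤ n, ⌊Int.fract (β + i*α) + T⌋ = ⌊Int.fract β + T⌋ := by
    intro i hi
    have h0 := hfloor2 0 (by omega)
    simp only [Nat.cast_zero, zero_mul, add_zero] at h0
    rw [hfloor2 i hi, h0]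
  set ε := ⌊Int.fract β + T⌋ with hε
  have hεb : ε = 0 ∨ ε = 1 := by
    have h1 : 0 ≤ ε := Int.le_floor.mpr (by push_cast; exact add_nonneg (Int.fract_nonneg _) hT0)
    have h2 : ε < 2 := Int.floor_lt.mpr (by push_cast; linarith [Int.fract_lt_one β])
    omega
  rcases hεb with hε0 | hε1
  · refine no_gap α a p q hα ha hq0 hq1 hq hp0 hp1 hp hcf β 0 T k n hn hT1 hTl1 ?_
    intro i hi
    have h := hconst i hi
    rw [hε0] at h
    have h2 : Int.fract (β + i*α) + T < 1 := by
      have := Int.lt_floor_add_one (Int.fract (β + i*α) + T)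
      rw [h] at this
      push_cast at this
      linarith
    rw [show β + i*α - 0 = β + i*α by ring]
    linarith
  · refine no_gap α a p q hα ha hq0 hq1 hq hp0 hp1 hp hcf β (1 - T) (1 - T) k n hn hT2 (by linarith) ?_
    intro i hi
    have h := hconst i hi
    rw [hε1] at h
    have h2 : 1 ≤ Int.fract (β + i*α) + T := by
      have := Int.floor_le (Int.fract (β + i*α) + T)
      rw [h] at this
      push_cast at this
      linarith
    have h3 := Int.fract_lt_one (β + i*α)
    have e1 : β + i*α - (1 - T) = (Int.fract (β + i*α) - (1 - T)) + ((⌊β + i*α⌋ : ℤ) : ℝ) := by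
      linear_combination - Int.floor_add_fract (β + (i:ℝ)*α)
    rw [e1, Int.fract_add_intCast]
    rw [Int.fract_eq_self.mpr ⟨by linarith, by linarith⟩]
    linarith

include ha hq0 hq1 hq hp0 hp1 hp hcf in
lemma floorB (j : ℕ) (w : ℝ)
    (hw1 : -(eta α p q (j+1)) < sgn (j+1) * w) (hw2 : sgn (j+1) * w < eta α p q (j+2))
    (i : ℕ) (hi1 : 1 ≤ i) (hi2 : i + 1 ≤ q (j+1) + q (j+2)) :
    ⌊(i:ℝ)*α + w⌋ = ⌊(i:ℝ)*α⌋ := by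
  have hη1 := eta_pos α p q hcf (j+1)
  have hη2 := eta_pos α p q hcf (j+2)
  set f := Int.fract ((i:ℝ)*α) with hf
  have hf0 : 0 ≤ f := Int.fract_nonneg _
  have hf1 : f < 1 := Int.fract_lt_one _
  have hsgn : sgn (j+1) = 1 ∨ sgn (j+1) = -1 := by
    unfold sgn
    rcases Nat.even_or_odd (j+2) with h | h
    · exact Or.inl (Even.neg_one_pow h)
    · exact Or.inr (Odd.neg_one_pow h)
  have hmain : 0 ≤ f + w ∧ f + w < 1 := by
    constructor
    · by_contra hbad
      push_neg at hbad
      have hgap := GAP α a p q ha hq0 hq1 hq hp0 hp1 hp hcf j i ⌊(i:ℝ)*α⌋ hi1 hi2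
      have he : (i:ℝ)*α - (⌊(i:ℝ)*α⌋:ℝ) = f := rfl
      rw [he] at hgap
      rcases hsgn with hs | hs <;> rw [hs] at hgap hw1 hw2 <;>
        rcases hgap with hg | hg <;> nlinarith
    · by_contra hbad
      push_neg at hbad
      have hgap := GAP α a p q ha hq0 hq1 hq hp0 hp1 hp hcf j i (⌊(i:ℝ)*α⌋ + 1) hi1 hi2
      have he : (i:ℝ)*α - ((⌊(i:ℝ)*α⌋ + 1 : ℤ):ℝ) = f - 1 := by
        push_cast [hf, Int.fract]; ring
      rw [he] at hgap
      rcases hsgn with hs | hs <;> rw [hs] at hgap hw1 hw2 <;>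
        rcases hgap with hg | hg <;> nlinarith
  have e1 : (i:ℝ)*α + w = (⌊(i:ℝ)*α⌋ : ℝ) + (f + w) := by
    linear_combination - Int.floor_add_fract ((i:ℝ)*α)
  rw [e1, Int.floor_intCast_add]
  have h0 : ⌊f + w⌋ = 0 :=
    Int.floor_eq_iff.mpr ⟨by push_cast; exact hmain.1, by push_cast; simpa using hmain.2⟩
  rw [h0, add_zero]

include hα ha hq0 hq1 hq hp0 hp1 hp hcf in
lemma ret_upper (j n : ℕ) (hn : n + 2 ≤ q (j+1) + q (j+2)) :
    retTime α (cyl α ((α : ℝ) : UnitAddCircle) n) ≤ q (j+1) := by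
  have hη1 := eta_pos α p q hcf (j+1)
  have hη2 := eta_pos α p q hcf (j+2)
  have hms := sgn_mul_self (j+1)
  have hd1 : sgn (j+1) * del α p q (j+1) = eta α p q (j+1) := by
    rw [del_eq, ← mul_assoc, hms, one_mul]
  have hd2 : sgn (j+1) * del α p q (j+2) = - eta α p q (j+2) := by
    rw [del_eq, sgn_succ (j+1), ← mul_assoc]
    have : sgn (j+1) * - sgn (j+1) = -1 := by rw [mul_neg, hms]
    rw [this]; ring
  set w1 : ℝ := - del α p q (j+1) - del α p q (j+2)/2 with hw1def
  set w2 : ℝ := - del α p q (j+2)/2 with hw2def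
  have hcw1 : sgn (j+1) * w1 = -(eta α p q (j+1)) + eta α p q (j+2)/2 := by
    rw [hw1def]; linear_combination -hd1 - hd2/2
  have hcw2 : sgn (j+1) * w2 = eta α p q (j+2)/2 := by
    rw [hw2def]; linear_combination -hd2/2
  have hcond1 : -(eta α p q (j+1)) < sgn (j+1) * w1 ∧ sgn (j+1) * w1 < eta α p q (j+2) := by
    rw [hcw1]; constructor <;> linarith
  have hcond2 : -(eta α p q (j+1)) < sgn (j+1) * w2 ∧ sgn (j+1) * w2 < eta α p q (j+2) := by
    rw [hcw2]; constructor <;> linarith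
  have hmem : ∀ w : ℝ, -(eta α p q (j+1)) < sgn (j+1) * w → sgn (j+1) * w < eta α p q (j+2) →
      ((α + w : ℝ) : UnitAddCircle) ∈ cyl α ((α : ℝ) : UnitAddCircle) n := by
    intro w h1 h2
    refine (mem_cyl α hα (α + w) α n).mpr ?_
    refine stp_of_floor_const α α (α + w) n 0 ?_
    intro k hk
    have e1 : α + w + (k:ℝ)*α = ((k+1 : ℕ):ℝ)*α + w := by push_cast; ring
    have e2 : α + (k:ℝ)*α = ((k+1 : ℕ):ℝ)*α := by push_cast; ring
    rw [e1, e2, floorB α a p q ha hq0 hq1 hq hp0 hp1 hp hcf j w h1 h2 (k+1) (by omega) (by omega)]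
    ring
  have hretmem : q (j+1) ∈ {m : ℕ | 1 ≤ m ∧
      ((rotF α)^[m] '' (cyl α ((α:ℝ) : UnitAddCircle) n) ∩ (cyl α ((α:ℝ) : UnitAddCircle) n)).Nonempty} := by
    refine ⟨q_pos a q ha hq1 hq j, ⟨((α + w2 : ℝ) : UnitAddCircle),
      ⟨((α + w1 : ℝ) : UnitAddCircle), hmem w1 hcond1.1 hcond1.2, ?_⟩,
      hmem w2 hcond2.1 hcond2.2⟩⟩
    rw [rot_iter]
    have e : α + w1 + (q (j+1) : ℝ)*α = (α + w2) + ((p (j+1) : ℤ) : ℝ) := by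
      rw [hw1def, hw2def]
      have : del α p q (j+1) = (q (j+1) : ℝ)*α - (p (j+1) : ℝ) := rfl
      push_cast
      linarith [this]
    rw [e, coe_add_int]
  exact Nat.sInf_le hretmem
end DYN

/-- Every `x ∈ 𝕋` satisfies
`R_up(x) ≥ limsup_{k→∞} q_{k+1} / (q_{k+1} + q_k - 1)`, and some `x ∈ 𝕋` attains
equality; that is, `min_x R_up(x) = limsup_{k→∞} q_{k+1} / (q_{k+1} + q_k - 1)`.
With our indexing the paper's `q_k`, `q_{k+1}` are `q (k+1)`, `q (k+2)`. -/
theorem statement6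
    (α : ℝ) (hα : α ∈ Set.Ioo (0 : ℝ) 1) (hirr : Irrational α)
    (a p q : ℕ → ℕ) (ha : ∀ k, 1 ≤ a k)
    -- `a k`, `p (k+1)`, `q (k+1)` are the paper's `a_{k+1}`, `p_k`, `q_k`;
    -- `p 0`, `q 0` are the paper's `p_{-1} = 1`, `q_{-1} = 0`.
    (hq0 : q 0 = 0) (hq1 : q 1 = 1) (hq : ∀ k, q (k + 2) = a k * q (k + 1) + q k)
    (hp0 : p 0 = 1) (hp1 : p 1 = 0) (hp : ∀ k, p (k + 2) = a k * p (k + 1) + p k)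
    -- `a` is the continued fraction expansion of `α`:
    -- the paper's `η_k = (-1)^k (q_k α - p_k)` is positive for all `k ≥ -1`.
    (hcf : ∀ k, 0 < (-1 : ℝ) ^ (k + 1) * ((q k : ℝ) * α - (p k : ℝ)))
    :
    (∀ x : UnitAddCircle,
      limsup (fun k : ℕ =>
        (q (k + 2) : ℝ≥0∞) / ((q (k + 2) + q (k + 1) - 1 : ℕ) : ℝ≥0∞)) atTop ≤ Rup α x) ∧
    (∃ x : UnitAddCircle,
      Rup α x =
        limsup (fun k : ℕ =>
          (q (k + 2) : ℝ≥0∞) / ((q (k + 2) + q (k + 1) - 1 : ℕ) : ℝ≥0∞)) atTop) := by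
  set u : ℕ → ℝ≥0∞ := fun k => (q (k + 2) : ℝ≥0∞) / ((q (k + 2) + q (k + 1) - 1 : ℕ) : ℝ≥0∞)
    with hu
  set L : ℝ≥0∞ := limsup u atTop with hL
  set mf : ℕ → ℕ := fun k => q (k + 2) + q (k + 1) - 1 with hmf
  have hq1' : ∀ k, 1 ≤ q (k + 1) := q_pos a q ha hq1 hq
  have hmf1 : ∀ k, mf k + 1 = q (k + 1) + q (k + 2) := by
    intro k
    have h : 1 ≤ q (k + 2) := hq1' (k + 1)
    simp only [hmf]
    omega
  have hmono : StrictMono mf := by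
    apply strictMono_nat_of_lt_succ
    intro k
    have h1 : q (k + 3) = a (k + 1) * q (k + 2) + q (k + 1) := hq (k + 1)
    have h2 : 1 * q (k + 2) ≤ a (k + 1) * q (k + 2) :=
      Nat.mul_le_mul (ha (k + 1)) (le_refl (q (k + 2)))
    have h3 : 1 ≤ q (k + 1) := hq1' k
    have h4 : 1 ≤ q (k + 2) := hq1' (k + 1)
    have h5 : 1 ≤ q (k + 3) := hq1' (k + 2)
    show mf k < mf (k + 1)
    simp only [hmf]
    show q (k + 2) + q (k + 1) - 1 < q (k + 3) + q (k + 2) - 1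
    omega
  have ret_lb : ∀ (x : UnitAddCircle) (k : ℕ), q (k + 2) ≤ retTime α (cyl α x (mf k)) := by
    intro x k
    have hne := ret_nonempty α a p q hα ha hq1 hq hp1 hp hcf x (mf k)
    have hmem := Nat.sInf_mem hne
    exact ret_lower α a p q hα ha hq0 hq1 hq hp0 hp1 hp hcf x k (mf k) (hmf1 k) _ hmem
  have part1 : ∀ x : UnitAddCircle, L ≤ Rup α x := by
    intro x
    by_contra hcon
    push_neg at hcon
    obtain ⟨b, hb1, hb2⟩ := exists_between hcon
    have hfreq : ∃ᶠ k in atTop, b < u k := frequently_lt_of_lt_limsup (by isBoundedDefault) hb2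
    have hfreq2 : ∃ᶠ k in atTop,
        b ≤ (fun n : ℕ => (retTime α (cyl α x n) : ℝ≥0∞) / (n : ℝ≥0∞)) (mf k) := by
      refine hfreq.mono fun k hk => ?_
      refine le_trans hk.le ?_
      simp only [hu, hmf]
      exact ENNReal.div_le_div (by exact_mod_cast Nat.cast_le.mpr (ret_lb x k)) (le_refl _)
    have hfreq3 : ∃ᶠ n in atTop,
        b ≤ (retTime α (cyl α x n) : ℝ≥0∞) / (n : ℝ≥0∞) :=
      (hmono.tendsto_atTop).frequently hfreq2
    have : b ≤ Rup α x := le_limsup_of_frequently_le hfreq3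
    exact absurd (lt_of_le_of_lt this hb1) (lt_irrefl b)
  refine ⟨part1, ⟨((α : ℝ) : UnitAddCircle), le_antisymm ?_ (part1 _)⟩⟩
  by_contra hcon
  push_neg at hcon
  obtain ⟨b, hb1, hb2⟩ := exists_between hcon
  have hev : ∀ᶠ k in atTop, u k < b := eventually_lt_of_limsup_lt hb1
  obtain ⟨K, hK⟩ := eventually_atTop.mp hev
  have claim : ∀ᶠ n in atTop,
      (retTime α (cyl α ((α : ℝ) : UnitAddCircle) n) : ℝ≥0∞) / (n : ℝ≥0∞) ≤ b := by
    rw [eventually_atTop]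
    refine ⟨mf K, fun n hn => ?_⟩
    set P : ℕ → Prop := fun k => mf k ≤ n with hP
    have hPK : P K := hn
    have hKn : K ≤ n := le_trans hmono.le_apply hn
    set k := Nat.findGreatest P n with hkdef
    have hk1 : P k := Nat.findGreatest_spec hKn hPK
    have hkK : K ≤ k := Nat.le_findGreatest hKn hPK
    have hk2 : ¬ P (k + 1) := by
      intro hPk1
      have hle : k + 1 ≤ n := le_trans hmono.le_apply hPk1
      exact absurd hPk1 (Nat.findGreatest_is_greatest (Nat.lt_succ_self k) hle)
    have hn2 : n + 2 ≤ q (k + 2) + q (k + 3) := by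
      have h1 : n < mf (k + 1) := by
        simp only [hP] at hk2
        omega
      have h2 : mf (k + 1) + 1 = q (k + 2) + q (k + 3) := hmf1 (k + 1)
      omega
    have hret : retTime α (cyl α ((α : ℝ) : UnitAddCircle) n) ≤ q (k + 2) :=
      ret_upper α a p q hα ha hq0 hq1 hq hp0 hp1 hp hcf (k + 1) n hn2
    have hstep : (retTime α (cyl α ((α : ℝ) : UnitAddCircle) n) : ℝ≥0∞) / (n : ℝ≥0∞) ≤ u k := by
      simp only [hu, hmf]
      exact ENNReal.div_le_div (by exact_mod_cast Nat.cast_le.mpr hret)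
        (by exact_mod_cast Nat.cast_le.mpr hk1)
    exact le_trans hstep (hK k hkK).le
  have : Rup α ((α : ℝ) : UnitAddCircle) ≤ b := limsup_le_of_le (by isBoundedDefault) claim
  exact absurd (lt_of_lt_of_le hb2 this) (lt_irrefl b)
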